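/- arXiv:0911.1626 — 6 statements merged into one kernel-verified Lean document; each statement's English description precedes it below -/
import Mathlib

section
/- Let (V,d) be a finite metric space with doubling constant λ, let η be a natural number and r > 0. Then there exists a partition of V into nonempty parts S_1, …, S_m together with designated leaders v_i ∈ S_i such that: (i) S_i is contained in the ball of radius 2^{-η-1}·r around v_i (hence diam S_i ≤ 2^{-η}·r); (ii) the leaders are pairwise at distance strictly greater than 2^{-η-1}·r; and (iii) for every v ∈ V the ball of radius r around v intersects at most λ^{3+η} of the parts S_i. -/
/-- Lemma 2 of the paper: a `(2^(-η), lam^(3+η))` partition scheme for a finite doubling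
metric space.  For every `r > 0` there is a partition of `V` into parts `S i` with
leaders `v i ∈ S i` such that each part lies in the closed ball of radius `2^(-η-1)*r`
around its leader, the leaders are pairwise at distance `> 2^(-η-1)*r`, and every ball
of radius `r` intersects at most `lam^(3+η)` parts. -/
theorem doubling_partition_scheme {V : Type*} [MetricSpace V] [Fintype V] (lam : ℕ)
    (hdb : ∀ (x : V) (s : ℝ), 0 < s → ∃ C : Finset V, C.card ≤ lam ∧
      Metric.closedBall x (2 * s) ⊆ ⋃ c ∈ C, Metric.closedBall c s)
    (η : ℕ) (r : ℝ) (hr : 0 < r) :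
    ∃ (m : ℕ) (S : Fin m → Set V) (v : Fin m → V),
      (∀ i, v i ∈ S i) ∧
      (∀ i j, i ≠ j → Disjoint (S i) (S j)) ∧
      (⋃ i, S i) = Set.univ ∧
      (∀ i, S i ⊆ Metric.closedBall (v i) ((2 : ℝ) ^ (-(η : ℤ) - 1) * r)) ∧
      (∀ i j, i ≠ j → (2 : ℝ) ^ (-(η : ℤ) - 1) * r < dist (v i) (v j)) ∧
      (∀ x : V, {i : Fin m | (Metric.ball x r ∩ S i).Nonempty}.ncard ≤ lam ^ (3 + η)) := by
  classical
  set δ : ℝ := (2 : ℝ) ^ (-(η : ℤ) - 1) * r with hδdef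
  have hδ : 0 < δ := by positivity
  -- maximal δ-separated set
  have hexists : ∃ N : Finset V, (∀ a ∈ N, ∀ b ∈ N, a ≠ b → δ < dist a b) ∧
      ∀ x : V, ∃ y ∈ N, dist x y ≤ δ := by
    set 𝒮 : Finset (Finset V) :=
      Finset.univ.filter (fun s => ∀ a ∈ s, ∀ b ∈ s, a ≠ b → δ < dist a b) with h𝒮
    have hne : 𝒮.Nonempty := ⟨∅, by simp [h𝒮]⟩
    obtain ⟨N, hN, hmax⟩ := 𝒮.exists_max_image Finset.card hne
    have hNsep : ∀ a ∈ N, ∀ b ∈ N, a ≠ b → δ < dist a b :=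
      (Finset.mem_filter.1 hN).2
    refine ⟨N, hNsep, fun x => ?_⟩
    by_contra h
    push_neg at h
    have hxN : x ∉ N := fun hx => by
      have := h x hx; simp at this; linarith
    have hins : insert x N ∈ 𝒮 := by
      rw [h𝒮, Finset.mem_filter]
      refine ⟨Finset.mem_univ _, fun a ha b hb hab => ?_⟩
      rcases Finset.mem_insert.1 ha with ha' | ha'
      · subst ha'
        rcases Finset.mem_insert.1 hb with hb' | hb'
        · exact absurd hb'.symm hab
        · exact h b hb'
      · rcases Finset.mem_insert.1 hb with hb' | hb'
        · subst hb'
          rw [dist_comm]; exact h a ha'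
        · exact hNsep a ha' b hb' hab
    have := hmax _ hins
    rw [Finset.card_insert_of_notMem hxN] at this
    omega
  obtain ⟨N, hNsep, hNcov⟩ := hexists
  -- assignment function
  choose f hfN hfd using hNcov
  refine ⟨N.card, fun i => {x | f x = (N.equivFin.symm i : V)},
    fun i => (N.equivFin.symm i : V), ?_, ?_, ?_, ?_, ?_, ?_⟩
  case _ =>
    -- v i ∈ S i
    intro i
    set w : V := (N.equivFin.symm i : V) with hw
    have hwN : w ∈ N := (N.equivFin.symm i).2
    show f w = w
    by_contra hne
    have := hNsep (f w) (hfN w) w hwN hne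
    have := hfd w
    rw [dist_comm] at this
    linarith
  case _ =>
    intro i j hij
    rw [Set.disjoint_left]
    intro x hx hx'
    apply hij
    have : N.equivFin.symm i = N.equivFin.symm j := Subtype.ext (hx ▸ hx')
    exact N.equivFin.symm.injective this
  case _ =>
    rw [Set.eq_univ_iff_forall]
    intro x
    refine Set.mem_iUnion.2 ⟨N.equivFin ⟨f x, hfN x⟩, ?_⟩
    show f x = _
    simp
  case _ =>
    intro i x hx
    rw [Metric.mem_closedBall]
    show dist x (N.equivFin.symm i : V) ≤ δ
    have : f x = (N.equivFin.symm i : V) := hx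
    rw [← this]
    exact hfd x
  case _ =>
    intro i j hij
    show δ < dist (N.equivFin.symm i : V) (N.equivFin.symm j : V)
    refine hNsep _ (N.equivFin.symm i).2 _ (N.equivFin.symm j).2 ?_
    intro h
    exact hij (N.equivFin.symm.injective (Subtype.ext h))
  case _ =>
    intro x
    -- iterated doubling
    have iter : ∀ k : ℕ, ∀ (y : V) (s : ℝ), 0 < s → ∃ C : Finset V,
        C.card ≤ lam ^ k ∧
        Metric.closedBall y ((2 : ℝ) ^ k * s) ⊆ ⋃ c ∈ C, Metric.closedBall c s := by
      intro k
      induction k with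
      | zero =>
        intro y s hs
        exact ⟨{y}, by simp, by simp⟩
      | succ k ih =>
        intro y s hs
        obtain ⟨C, hC, hcov⟩ := hdb y ((2 : ℝ) ^ k * s) (by positivity)
        refine ⟨C.attach.biUnion (fun c => (ih c.1 s hs).choose), ?_, ?_⟩
        · calc (C.attach.biUnion fun c => (ih c.1 s hs).choose).card
              ≤ ∑ c ∈ C.attach, ((ih c.1 s hs).choose).card := Finset.card_biUnion_le
            _ ≤ ∑ _c ∈ C.attach, lam ^ k :=
                Finset.sum_le_sum (fun c _ => (ih c.1 s hs).choose_spec.1)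
            _ = C.card * lam ^ k := by simp [Finset.card_attach, mul_comm]
            _ ≤ lam * lam ^ k := Nat.mul_le_mul_right _ hC
            _ = lam ^ (k + 1) := by ring
        · intro z hz
          have hz' : z ∈ Metric.closedBall y (2 * ((2 : ℝ) ^ k * s)) := by
            convert hz using 2; ring
          obtain ⟨c, hc, hzc⟩ := Set.mem_iUnion₂.1 (hcov hz')
          have hsub := (ih c s hs).choose_spec.2 hzc
          obtain ⟨d, hd, hzd⟩ := Set.mem_iUnion₂.1 hsub
          exact Set.mem_iUnion₂.2 ⟨d, Finset.mem_biUnion.2 ⟨⟨c, hc⟩, Finset.mem_attach _ _, hd⟩, hzd⟩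
    set s : ℝ := (2 : ℝ) ^ (-(η : ℤ) - 2) * r with hsdef
    have hs : 0 < s := by positivity
    obtain ⟨C, hCcard, hCcov⟩ := iter (3 + η) x s hs
    have hscale : (2 : ℝ) ^ (3 + η) * s = 2 * r := by
      rw [hsdef, ← mul_assoc]
      rw [show ((2 : ℝ) ^ (3 + η) : ℝ) = (2 : ℝ) ^ ((3 + η : ℕ) : ℤ) by
        rw [zpow_natCast]]
      rw [← zpow_add₀ (two_ne_zero : (2:ℝ) ≠ 0)]
      rw [show (((3 + η : ℕ) : ℤ) + (-(η : ℤ) - 2)) = 1 by push_cast; ring]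
      norm_num
    -- leaders of intersecting parts lie in closedBall x (2r)
    have hmem : ∀ i ∈ {i : Fin N.card | (Metric.ball x r ∩ {x | f x = (N.equivFin.symm i : V)}).Nonempty},
        (N.equivFin.symm i : V) ∈ Metric.closedBall x ((2 : ℝ) ^ (3 + η) * s) := by
      intro i hi
      obtain ⟨y, hy1, hy2⟩ := hi
      rw [Metric.mem_closedBall, hscale, dist_comm]
      have h1 : dist x y < r := Metric.mem_ball'.1 hy1
      have h2 : dist y ((N.equivFin.symm i : V)) ≤ δ := hy2 ▸ hfd y
      have hδr : δ ≤ r := by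
        rw [hδdef]
        have : (2 : ℝ) ^ (-(η : ℤ) - 1) ≤ 1 := by
          apply zpow_le_one_of_nonpos₀ (by norm_num)
          omega
        nlinarith
      calc dist x ((N.equivFin.symm i : V)) ≤ dist x y + dist y _ := dist_triangle _ _ _
        _ ≤ r + δ := by linarith
        _ ≤ 2 * r := by linarith
    -- assign each such leader a covering center
    have hchoice : ∀ i ∈ {i : Fin N.card | (Metric.ball x r ∩ {x | f x = (N.equivFin.symm i : V)}).Nonempty},
        ∃ c ∈ C, (N.equivFin.symm i : V) ∈ Metric.closedBall c s := by
      intro i hi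
      have := hCcov (hmem i hi)
      obtain ⟨c, hc, hic⟩ := Set.mem_iUnion₂.1 this
      exact ⟨c, hc, hic⟩
    choose g hg1 hg2 using hchoice
    calc {i : Fin N.card | (Metric.ball x r ∩ {x | f x = (N.equivFin.symm i : V)}).Nonempty}.ncard
        ≤ (↑C : Set V).ncard := by
          apply Set.ncard_le_ncard_of_injOn (fun i => if h : _ then g i h else x)
          · intro i hi
            simp only [hi, dif_pos]
            exact hg1 i hi
          · intro i hi j hj hij
            simp only [hi, hj, dif_pos] at hij
            by_contra hne
            have hij' : N.equivFin.symm i ≠ N.equivFin.symm j :=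
              fun h => hne (N.equivFin.symm.injective h)
            have hij'' : (N.equivFin.symm i : V) ≠ (N.equivFin.symm j : V) :=
              fun h => hij' (Subtype.ext h)
            have hd := hNsep _ (N.equivFin.symm i).2 _ (N.equivFin.symm j).2 hij''
            have h1 : dist (N.equivFin.symm i : V) (g i hi) ≤ s := hg2 i hi
            have h2 : dist (N.equivFin.symm j : V) (g j hj) ≤ s := hg2 j hj
            have h2s : 2 * s = δ := by
              rw [hsdef, hδdef, ← mul_assoc]
              rw [show (2 : ℝ) * (2 : ℝ) ^ (-(η : ℤ) - 2) = (2 : ℝ) ^ (1 : ℤ) * (2 : ℝ) ^ (-(η : ℤ) - 2) by norm_num]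
              rw [← zpow_add₀ (two_ne_zero : (2:ℝ) ≠ 0)]
              rw [show ((1 : ℤ) + (-(η : ℤ) - 2)) = -(η:ℤ) - 1 by ring]
            have := dist_triangle (N.equivFin.symm i : V) (g i hi) (N.equivFin.symm j : V)
            rw [hij] at this
            rw [dist_comm (g j hj)] at this
            rw [hij] at h1
            linarith
      _ = C.card := Set.ncard_coe_finset C
      _ ≤ lam ^ (3 + η) := hCcard
end

section
/- Let (V,d) be a metric space with doubling constant λ, let η be a natural number, let τ > 1 satisfy 2τ·2^{-η}/(τ−1) ≤ 1, and let r > 0. Let P be a partition of V such that each part S ∈ P has a designated leader ℓ(S) ∈ S with S contained in the ball of radius (τ·2^{-η}/(τ−1))·r around ℓ(S), and such that leaders of distinct parts are at distance strictly greater than 2^{-η}·r. Then for every part S ∈ P, the number of parts S' ∈ P such that there exist v ∈ S and v' ∈ S' with d(v,v') < r is at most λ^{3+η}. -/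
lemma iter_doubling {V : Type*} [MetricSpace V] (lam : ℕ)
    (hdb : ∀ (x : V) (s : ℝ), 0 < s → ∃ C : Finset V, C.card ≤ lam ∧
      Metric.closedBall x (2 * s) ⊆ ⋃ c ∈ C, Metric.closedBall c s) :
    ∀ (n : ℕ) (x : V) (s : ℝ), 0 < s → ∃ C : Finset V, C.card ≤ lam ^ n ∧
      Metric.closedBall x ((2:ℝ) ^ n * s) ⊆ ⋃ c ∈ C, Metric.closedBall c s := by
  classical
  intro n
  induction n with
  | zero =>
    intro x s hs
    exact ⟨{x}, by simp, by simp⟩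
  | succ n ih =>
    intro x s hs
    obtain ⟨C0, hC0card, hC0cov⟩ := hdb x ((2:ℝ) ^ n * s) (by positivity)
    choose D hDcard hDcov using fun c : V => ih c s hs
    refine ⟨C0.biUnion D, ?_, ?_⟩
    · calc (C0.biUnion D).card ≤ ∑ c ∈ C0, (D c).card := Finset.card_biUnion_le
        _ ≤ ∑ _c ∈ C0, lam ^ n := Finset.sum_le_sum fun c _ => hDcard c
        _ = C0.card * lam ^ n := by simp [Finset.sum_const, mul_comm]
        _ ≤ lam * lam ^ n := Nat.mul_le_mul_right _ hC0card
        _ = lam ^ (n + 1) := by ring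
    · intro y hy
      have hy' : y ∈ Metric.closedBall x (2 * ((2:ℝ) ^ n * s)) := by
        convert hy using 2; ring
      obtain ⟨c, hc, hyc⟩ := by simpa using hC0cov hy'
      obtain ⟨d, hd, hyd⟩ := by simpa using hDcov c hyc
      simp only [Set.mem_iUnion]
      exact ⟨d, Finset.mem_biUnion.mpr ⟨c, hc, hd⟩, hyd⟩

/-- Lemma `doubknow`: in a metric space with doubling constant `lam`, given a partition
`P` of the space in which every part `S` lies in the closed ball of radius
`(τ*2^(-η)/(τ-1))*r` around its leader `ℓ S` and leaders of distinct parts are at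
distance `> 2^(-η)*r`, every part `S` "knows" (i.e. some point of `S` is at distance
`< r` from some point of) at most `lam^(3+η)` parts. -/
theorem partition_knows_bound {V : Type*} [MetricSpace V] (lam : ℕ)
    (hdb : ∀ (x : V) (s : ℝ), 0 < s → ∃ C : Finset V, C.card ≤ lam ∧
      Metric.closedBall x (2 * s) ⊆ ⋃ c ∈ C, Metric.closedBall c s)
    (η : ℕ) (τ : ℝ) (hτ : 1 < τ)
    (hτη : 2 * τ * (2 : ℝ) ^ (-(η : ℤ)) / (τ - 1) ≤ 1)
    (r : ℝ) (hr : 0 < r)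
    (P : Set (Set V)) (hpart : Setoid.IsPartition P)
    (ℓ : Set V → V)
    (hmem : ∀ S ∈ P, ℓ S ∈ S)
    (hball : ∀ S ∈ P, S ⊆ Metric.closedBall (ℓ S) ((τ * (2 : ℝ) ^ (-(η : ℤ)) / (τ - 1)) * r))
    (hsep : ∀ S ∈ P, ∀ S' ∈ P, S ≠ S' → (2 : ℝ) ^ (-(η : ℤ)) * r < dist (ℓ S) (ℓ S')) :
    ∀ S ∈ P,
      {S' | S' ∈ P ∧ ∃ v ∈ S, ∃ v' ∈ S', dist v v' < r}.Finite ∧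
      {S' | S' ∈ P ∧ ∃ v ∈ S, ∃ v' ∈ S', dist v v' < r}.ncard ≤ lam ^ (3 + η) := by
  intro S hS
  set K := {S' | S' ∈ P ∧ ∃ v ∈ S, ∃ v' ∈ S', dist v v' < r} with hK
  set s : ℝ := r / 2 ^ (2 + η) with hs
  have hspos : 0 < s := by positivity
  -- leaders of known parts are within 2r of ℓ S
  have hlead : ∀ S' ∈ K, ℓ S' ∈ Metric.closedBall (ℓ S) ((2:ℝ) ^ (3 + η) * s) := by
    intro S' hS'
    obtain ⟨hS'P, v, hv, v', hv', hd⟩ := hS'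
    have h1 : dist v (ℓ S) ≤ (τ * (2 : ℝ) ^ (-(η : ℤ)) / (τ - 1)) * r := by
      simpa [Metric.mem_closedBall] using hball S hS hv
    have h2 : dist v' (ℓ S') ≤ (τ * (2 : ℝ) ^ (-(η : ℤ)) / (τ - 1)) * r := by
      simpa [Metric.mem_closedBall] using hball S' hS'P hv'
    have hRr : 2 * ((τ * (2 : ℝ) ^ (-(η : ℤ)) / (τ - 1)) * r) ≤ r := by
      have heq2 : 2 * (τ * (2 : ℝ) ^ (-(η : ℤ)) / (τ - 1)) = 2 * τ * (2 : ℝ) ^ (-(η : ℤ)) / (τ - 1) := by ring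
      nlinarith [hτη, heq2, hr.le]
    have hdist : dist (ℓ S') (ℓ S) ≤ 2 * r := by
      calc dist (ℓ S') (ℓ S) ≤ dist (ℓ S') v' + dist v' v + dist v (ℓ S) :=
            dist_triangle4 _ _ _ _
        _ ≤ (τ * (2 : ℝ) ^ (-(η : ℤ)) / (τ - 1)) * r + r +
            (τ * (2 : ℝ) ^ (-(η : ℤ)) / (τ - 1)) * r := by
            rw [dist_comm (ℓ S') v', dist_comm v' v]
            have := hd.le
            gcongr
        _ ≤ 2 * r := by nlinarith [hRr]
    have heq : (2:ℝ) ^ (3 + η) * s = 2 * r := by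
      rw [hs]
      field_simp
      ring
    rw [Metric.mem_closedBall, heq]
    exact hdist
  -- cover by lam^(3+η) balls of radius s
  obtain ⟨C, hCcard, hCcov⟩ := iter_doubling lam hdb (3 + η) (ℓ S) s hspos
  -- each small ball contains leader of at most one known part
  have hkey : ∀ S' ∈ K, ∃ c ∈ C, ℓ S' ∈ Metric.closedBall c s := by
    intro S' hS'
    have := hCcov (hlead S' hS')
    simpa using this
  choose g hgC hgball using hkey
  have hginj : ∀ (S' : Set V) (h1 : S' ∈ K) (S'' : Set V) (h2 : S'' ∈ K),
      g S' h1 = g S'' h2 → S' = S'' := by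
    intro S' hS' S'' hS'' hg
    by_contra hne
    have hd : dist (ℓ S') (ℓ S'') ≤ 2 * s := by
      have t1 : dist (ℓ S') (g S' hS') ≤ s := by
        simpa [Metric.mem_closedBall] using hgball S' hS'
      have t2 : dist (ℓ S'') (g S'' hS'') ≤ s := by
        simpa [Metric.mem_closedBall] using hgball S'' hS''
      have t3 := dist_triangle (ℓ S') (g S' hS') (ℓ S'')
      rw [hg] at t1 t3
      have t4 : dist (g S'' hS'') (ℓ S'') = dist (ℓ S'') (g S'' hS'') := dist_comm _ _
      linarith
    have hsep' := hsep S' hS'.1 S'' hS''.1 hne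
    have h2s : 2 * s < (2 : ℝ) ^ (-(η : ℤ)) * r := by
      have hp : (0:ℝ) < 2 ^ η := by positivity
      rw [hs, zpow_neg, zpow_natCast]
      have h4 : (2:ℝ) ^ (2 + η) = 4 * 2 ^ η := by rw [pow_add]; norm_num
      rw [h4]
      have hL : 2 * (r / (4 * (2:ℝ) ^ η)) = r / (2 * 2 ^ η) := by
        field_simp; ring
      rw [hL, inv_mul_eq_div, div_lt_div_iff₀ (by positivity) hp]
      nlinarith [hr, hp]
    linarith
  -- conclude finiteness and cardinality
  classical
  have hmap : ∀ S' : K, g S'.1 S'.2 ∈ C := fun S' => hgC S'.1 S'.2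
  have hinj : Function.Injective (fun S' : K => (⟨g S'.1 S'.2, hmap S'⟩ : {c // c ∈ C})) := by
    intro a b hab
    exact Subtype.ext (hginj a.1 a.2 b.1 b.2 (congrArg Subtype.val hab))
  have hfin : K.Finite := by
    have : Finite {c // c ∈ C} := Finset.finite_toSet C |>.to_subtype
    have : Finite K := Finite.of_injective _ hinj
    exact Set.toFinite K
  refine ⟨hfin, ?_⟩
  calc K.ncard = Nat.card K := (Nat.card_coe_set_eq K).symm
    _ ≤ Nat.card {c // c ∈ C} := Nat.card_le_card_of_injective _ hinj
    _ = C.card := by simp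
    _ ≤ lam ^ (3 + η) := hCcard
end

section
/- Let (V,d) be a metric space, let τ > 1, let η be a natural number, let r_j > 0 and set c = τ·2^{-η}/(τ−1) and r_{j+1} = τ·r_j. Let S_1, S_1* ⊆ V with v ∈ S_1, v* ∈ S_1*, and suppose d(u, u*) ≥ r_j for all u ∈ S_1 and u* ∈ S_1* (the sets do not know each other at scale r_j). Suppose further that there exist points u, u*, l, l* ∈ V with d(v, l) < c·r_{j+1}, d(u, l) < c·r_{j+1}, d(u*, l*) < c·r_{j+1}, d(v*, l*) < c·r_{j+1}, and d(u, u*) < r_{j+1}. Then r_j ≤ d(v, v*) < (1 + 4τ·2^{-η}/(τ−1))·τ·r_j. -/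
/-- Lemma `stretchlimit` (distance approximation): if the sets `S1 ∋ v` and `S1* ∋ v*`
do not know each other at scale `r_j` (all pairs at distance `≥ r_j`), while at scale
`r_{j+1} = τ*r_j` there are points `u, u*` at distance `< r_{j+1}` whose leaders `l, l*`
are within `c*r_{j+1}` of `v, u` resp. `u*, v*` (where `c = τ*2^(-η)/(τ-1)`), then
`r_j ≤ d(v,v*) < (1 + 4τ*2^(-η)/(τ-1)) * τ * r_j`. -/
theorem distance_approximation {V : Type*} [MetricSpace V] (τ : ℝ) (hτ : 1 < τ) (η : ℕ)
    (rj : ℝ) (hrj : 0 < rj)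
    (c : ℝ) (hc : c = τ * (2 : ℝ) ^ (-(η : ℤ)) / (τ - 1))
    (S1 S1s : Set V) (v vs : V) (hv : v ∈ S1) (hvs : vs ∈ S1s)
    (hfar : ∀ u ∈ S1, ∀ us ∈ S1s, rj ≤ dist u us)
    (u us l ls : V)
    (h1 : dist v l < c * (τ * rj)) (h2 : dist u l < c * (τ * rj))
    (h3 : dist us ls < c * (τ * rj)) (h4 : dist vs ls < c * (τ * rj))
    (h5 : dist u us < τ * rj) :
    rj ≤ dist v vs ∧
      dist v vs < (1 + 4 * τ * (2 : ℝ) ^ (-(η : ℤ)) / (τ - 1)) * τ * rj := by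
  refine ⟨hfar v hv vs hvs, ?_⟩
  have t1 : dist v vs ≤ dist v l + dist l u + dist u us + dist us ls + dist ls vs := by
    calc dist v vs ≤ dist v ls + dist ls vs := dist_triangle _ _ _
      _ ≤ (dist v us + dist us ls) + dist ls vs := by
          have := dist_triangle v us ls; linarith
      _ ≤ ((dist v u + dist u us) + dist us ls) + dist ls vs := by
          have := dist_triangle v u us; linarith
      _ ≤ (((dist v l + dist l u) + dist u us) + dist us ls) + dist ls vs := by
          have := dist_triangle v l u; linarith
  rw [dist_comm l u] at t1
  rw [dist_comm ls vs] at t1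
  have hcc : 4 * τ * (2 : ℝ) ^ (-(η : ℤ)) / (τ - 1) = 4 * c := by rw [hc]; ring
  rw [hcc]
  nlinarith [h1, h2, h3, h4, h5, t1]
end

section
/- Let (X,d) be a finite metric space, let r ∈ X, let τ > 1, r_0 > 0, D ≥ 1 be reals, and let ℓ : X → ℤ be a function such that for every x ∈ X with x ≠ r, τ^{ℓ(x)}·r_0 ≤ d(x,r) ≤ D·τ^{ℓ(x)}·r_0. Call a tree on the vertex set X 'layered' if every edge of it is either incident to r or joins two vertices x, y with ℓ(x) = ℓ(y). Then for every spanning tree T of X (a connected acyclic simple graph with vertex set X) there exists a layered spanning tree T_L of X with w(T_L) ≤ 2·m·(1+D)·w(T), where m = ⌈log_τ(1+D)⌉ and the weight w of a tree is the sum of d(x,y) over its edges {x,y}. -/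
/-- The weight of a graph on a finite metric space: the sum of the distances over its
edges. -/
noncomputable def treeWeight {X : Type*} [MetricSpace X] [Fintype X]
    (T : SimpleGraph X) : ℝ :=
  ∑ᶠ e ∈ T.edgeSet, Sym2.lift ⟨fun x y => dist x y, fun x y => dist_comm x y⟩ e




namespace AlaJia
open List

variable {X : Type*}

section DecEq
variable [DecidableEq X]

/-- The element just before the first occurrence of `x` in `l`, with anchor `a`. -/
def prevElt : X → List X → X → X
  | a, [], _ => a
  | a, b :: l, x => if b = x then a else prevElt b l x

lemma prevElt_pair_sublist : ∀ (a : X) (l : List X) (x : X), x ∈ l →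
    [prevElt a l x, x] <+ a :: l := by
  intro a l
  induction l generalizing a with
  | nil => intro x hx; simp at hx
  | cons b l ih =>
    intro x hx
    by_cases hbx : b = x
    · subst hbx
      rw [prevElt, if_pos rfl]
      exact List.Sublist.cons₂ a (List.Sublist.cons₂ b (List.nil_sublist l))
    · rw [prevElt, if_neg hbx]
      have hx' : x ∈ l := by
        rcases List.mem_cons.1 hx with h | h
        · exact absurd h.symm hbx
        · exact h
      exact (ih b x hx').cons a

lemma indexOf_lt_of_pair_sublist :
    ∀ (l : List X), l.Nodup → ∀ y x : X, [y, x] <+ l → l.idxOf y < l.idxOf x := by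
  intro l
  induction l with
  | nil => intro _ y x h; exact absurd (List.sublist_nil.1 h) (by simp)
  | cons b l ih =>
    intro hnd y x h
    have hbl : b ∉ l := (List.nodup_cons.1 hnd).1
    cases h with
    | cons _ h' =>
      have hy : y ∈ l := h'.subset (by simp)
      have hx : x ∈ l := h'.subset (by simp)
      have hyb : b ≠ y := fun e => hbl (e ▸ hy)
      have hxb : b ≠ x := fun e => hbl (e ▸ hx)
      rw [List.idxOf_cons_ne _ hyb, List.idxOf_cons_ne _ hxb]
      exact Nat.succ_lt_succ (ih (List.nodup_cons.1 hnd).2 y x h')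
    | cons_cons _ h' =>
      have hx : x ∈ l := h'.subset (by simp)
      have hxb : b ≠ x := fun e => hbl (e ▸ hx)
      rw [List.idxOf_cons_self, List.idxOf_cons_ne _ hxb]
      exact Nat.succ_pos _

/-- keep first occurrences, skipping elements of `seen`. -/
def dgo : Finset X → List X → List X
  | _, [] => []
  | seen, a :: l => if a ∈ seen then dgo seen l else a :: dgo (insert a seen) l

lemma dgo_sublist : ∀ (seen : Finset X) (l : List X), dgo seen l <+ l := by
  intro seen l
  induction l generalizing seen with
  | nil => simp [dgo]
  | cons a l ih =>
    rw [dgo]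
    by_cases h : a ∈ seen
    · rw [if_pos h]; exact (ih seen).cons a
    · rw [if_neg h]; exact (ih (insert a seen)).cons₂ a

lemma not_mem_seen_of_mem_dgo :
    ∀ (seen : Finset X) (l : List X) (x : X), x ∈ dgo seen l → x ∉ seen := by
  intro seen l
  induction l generalizing seen with
  | nil => intro x hx; simp [dgo] at hx
  | cons a l ih =>
    intro x hx
    rw [dgo] at hx
    by_cases h : a ∈ seen
    · rw [if_pos h] at hx; exact ih seen x hx
    · rw [if_neg h] at hx
      rcases List.mem_cons.1 hx with rfl | hx'
      · exact h
      · have := ih (insert a seen) x hx'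
        intro hxs; exact this (Finset.mem_insert_of_mem hxs)

lemma mem_dgo_of :
    ∀ (seen : Finset X) (l : List X) (x : X), x ∈ l → x ∉ seen → x ∈ dgo seen l := by
  intro seen l
  induction l generalizing seen with
  | nil => intro x hx; simp at hx
  | cons a l ih =>
    intro x hx hxs
    rw [dgo]
    by_cases h : a ∈ seen
    · rw [if_pos h]
      rcases List.mem_cons.1 hx with rfl | hx'
      · exact absurd h hxs
      · exact ih seen x hx' hxs
    · rw [if_neg h]
      rcases List.mem_cons.1 hx with rfl | hx'
      · exact List.mem_cons_self
      · by_cases hxa : x = a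
        · subst hxa; exact List.mem_cons_self
        · exact List.mem_cons_of_mem _
            (ih (insert a seen) x hx' (by simp [hxa, hxs]))

lemma dgo_nodup : ∀ (seen : Finset X) (l : List X), (dgo seen l).Nodup := by
  intro seen l
  induction l generalizing seen with
  | nil => simp [dgo]
  | cons a l ih =>
    rw [dgo]
    by_cases h : a ∈ seen
    · rw [if_pos h]; exact ih seen
    · rw [if_neg h]
      refine List.nodup_cons.2 ⟨fun hmem => ?_, ih (insert a seen)⟩
      exact not_mem_seen_of_mem_dgo _ _ _ hmem (Finset.mem_insert_self a seen)

end DecEq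


section Metric
variable [MetricSpace X]


noncomputable def ccost : X → List X → ℝ
  | _, [] => 0
  | a, b :: l => dist a b + ccost b l

@[simp] lemma ccost_nil (a : X) : ccost a [] = 0 := rfl

@[simp] lemma ccost_cons (a b : X) (l : List X) :
    ccost a (b :: l) = dist a b + ccost b l := rfl

lemma ccost_nonneg : ∀ (a : X) (l : List X), 0 ≤ ccost a l := by
  intro a l
  induction l generalizing a with
  | nil => simp
  | cons b l ih => simp only [ccost_cons]; have := dist_nonneg (x := a) (y := b); linarith [ih b]

lemma ccost_sublist {l' l : List X} (h : l' <+ l) : ∀ a : X, ccost a l' ≤ ccost a l := by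
  induction h with
  | slnil => intro a; exact le_rfl
  | cons b h ih =>
    intro a
    rename_i l₁ l₂
    cases l₁ with
    | nil =>
      simp only [ccost_nil, ccost_cons]
      have := dist_nonneg (x := a) (y := b)
      linarith [ccost_nonneg b l₂]
    | cons c l₃ =>
      have h1 : dist a c ≤ dist a b + dist b c := dist_triangle a b c
      have h2 := ih b
      simp only [ccost_cons] at h2 ⊢
      linarith
  | cons_cons b h ih =>
    intro a
    simp only [ccost_cons]
    linarith [ih b]

lemma ccost_insert (x y : X) :
    ∀ (A : List X) (a : X) (B : List X),
      ccost a (A ++ y :: x :: y :: B) = ccost a (A ++ y :: B) + dist y x + dist x y := by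
  intro A
  induction A with
  | nil => intro a B; simp only [List.nil_append, ccost_cons]; ring
  | cons c A ih =>
    intro a B
    simp only [List.cons_append, ccost_cons, ih c]
    ring

lemma chain_sum_le [DecidableEq X] {C : ℝ} (G : X → X → ℝ) :
    ∀ (a : X) (l : List X), l.Nodup →
      (∀ x ∈ l, ∀ y : X, (y = a ∨ y ∈ l) → G y x ≤ C * dist y x) →
      ∑ x ∈ l.toFinset, G (prevElt a l x) x ≤ C * ccost a l := by
  intro a l
  induction l generalizing a with
  | nil => intro _ _; simp
  | cons b l ih =>
    intro hnd hG
    have hbl : b ∉ l := (List.nodup_cons.1 hnd).1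
    have hstep : ∀ x ∈ l.toFinset, G (prevElt a (b :: l) x) x = G (prevElt b l x) x := by
      intro x hx
      have hxl : x ∈ l := List.mem_toFinset.1 hx
      have hbx : b ≠ x := fun e => hbl (e ▸ hxl)
      rw [prevElt, if_neg hbx]
    have hins : (b :: l).toFinset = insert b l.toFinset := by simp
    rw [hins, Finset.sum_insert (by simpa using hbl)]
    have h1 : G (prevElt a (b :: l) b) b = G a b := by rw [prevElt, if_pos rfl]
    rw [h1, Finset.sum_congr rfl hstep]
    have h2 : G a b ≤ C * dist a b := hG b (List.mem_cons_self) a (Or.inl rfl)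
    have h3 : ∑ x ∈ l.toFinset, G (prevElt b l x) x ≤ C * ccost b l := by
      refine ih b (List.nodup_cons.1 hnd).2 ?_
      intro x hx y hy
      refine hG x (List.mem_cons_of_mem _ hx) y ?_
      rcases hy with rfl | hy'
      · exact Or.inr (List.mem_cons_self)
      · exact Or.inr (List.mem_cons_of_mem _ hy')
    simp only [ccost_cons]
    linarith

lemma sep_bound (r x y : X) {τ r0 D : ℝ} {mZ : ℤ} (hτ : 1 < τ) (hr0 : 0 < r0)
    (hD : 1 ≤ D) (hpow : 1 + D ≤ τ ^ mZ) {ℓ : X → ℤ}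
    (hx1 : τ ^ ℓ x * r0 ≤ dist x r) (hx2 : dist x r ≤ D * (τ ^ ℓ x * r0))
    (hy1 : τ ^ ℓ y * r0 ≤ dist y r) (hy2 : dist y r ≤ D * (τ ^ ℓ y * r0))
    (hne : ℓ x ≠ ℓ y) (hdvd : mZ ∣ ℓ x - ℓ y) :
    dist x r ≤ (1 + D) * dist y x := by
  have hτ0 : (0 : ℝ) < τ := lt_trans one_pos hτ
  have hm1 : 1 ≤ mZ := by
    by_contra h
    push_neg at h
    have h0 : mZ ≤ 0 := by omega
    have : τ ^ mZ ≤ 1 := zpow_le_one_of_nonpos₀ hτ.le h0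
    linarith
  have hcases : ℓ y + mZ ≤ ℓ x ∨ ℓ x + mZ ≤ ℓ y := by
    obtain ⟨k, hk⟩ := hdvd
    rcases lt_trichotomy k 0 with hk0 | hk0 | hk0
    · right; nlinarith
    · exfalso; apply hne; rw [hk0, mul_zero] at hk; omega
    · left; nlinarith
  have key : ∀ i j : ℤ, i + mZ ≤ j → τ ^ i * (1 + D) ≤ τ ^ j := by
    intro i j hij
    have hpi : (0 : ℝ) < τ ^ i := zpow_pos hτ0 i
    have h1 : τ ^ i * (1 + D) ≤ τ ^ i * τ ^ mZ := by nlinarith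
    have h2 : τ ^ i * τ ^ mZ = τ ^ (i + mZ) := (zpow_add₀ (ne_of_gt hτ0) i mZ).symm
    have h3 : τ ^ (i + mZ) ≤ τ ^ j := zpow_le_zpow_right₀ hτ.le hij
    linarith
  have htri1 : dist x r ≤ dist y x + dist y r := by
    have h := dist_triangle x y r
    rw [dist_comm x y] at h
    exact h
  have htri2 : dist y r ≤ dist y x + dist x r := dist_triangle y x r
  have hE : (0 : ℝ) ≤ dist y x := dist_nonneg
  have hD0 : (0 : ℝ) < 1 + D := by linarith
  rcases hcases with hc | hc
  · have hk := key _ _ hc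
    have hk' : (τ ^ ℓ y * r0) * (1 + D) ≤ τ ^ ℓ x * r0 := by nlinarith
    nlinarith [mul_le_mul_of_nonneg_left hy2 hD0.le,
      mul_le_mul_of_nonneg_left hk' (by linarith : (0:ℝ) ≤ D),
      mul_le_mul_of_nonneg_left htri1 hD0.le]
  · have hk := key _ _ hc
    have hk' : (τ ^ ℓ x * r0) * (1 + D) ≤ τ ^ ℓ y * r0 := by nlinarith
    nlinarith [mul_le_mul_of_nonneg_left hx2 hD0.le,
      mul_le_mul_of_nonneg_left hk' (by linarith : (0:ℝ) ≤ D),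
      mul_le_mul_of_nonneg_left htri2 (by linarith : (0:ℝ) ≤ D)]



noncomputable def edist2 : Sym2 X → ℝ :=
  Sym2.lift ⟨fun x y => dist x y, fun x y => dist_comm x y⟩

@[simp] lemma edist2_mk (x y : X) : edist2 s(x, y) = dist x y := rfl

lemma edist2_nonneg (e : Sym2 X) : 0 ≤ edist2 e := by
  induction e using Sym2.inductionOn with
  | hf x y => exact dist_nonneg

lemma treeWeight_eq [Fintype X] (G : SimpleGraph X) :
    treeWeight G = ∑ e ∈ (Set.toFinite G.edgeSet).toFinset, edist2 e := by
  rw [treeWeight, ← finsum_mem_coe_finset, Set.Finite.coe_toFinset]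
  rfl

lemma treeWeight_nonneg [Fintype X] (G : SimpleGraph X) : 0 ≤ treeWeight G := by
  rw [treeWeight_eq]
  exact Finset.sum_nonneg fun e _ => edist2_nonneg e

lemma tour_exists [Fintype X] [DecidableEq X] (T : SimpleGraph X) (hTc : T.Connected)
    (r : X) :
    ∃ L : List X, (∀ x : X, x ∈ r :: L) ∧ ccost r L ≤ 2 * treeWeight T := by
  classical
  set Fe : Finset (Sym2 X) := (Set.toFinite T.edgeSet).toFinset with hFe
  have key : ∀ (n : ℕ) (s : Finset X), sᶜ.card ≤ n → r ∈ s →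
      ∀ L : List X, (∀ z ∈ s, z ∈ r :: L) →
      ∃ L' : List X, (∀ x : X, x ∈ r :: L') ∧
        ccost r L' ≤ ccost r L +
          2 * ∑ e ∈ Fe.filter (fun e => ¬ ∀ v ∈ e, v ∈ s), edist2 e := by
    intro n
    induction n with
    | zero =>
      intro s hcard hr L hcov
      have hs : s = Finset.univ := by
        have h0 : sᶜ = ∅ := Finset.card_eq_zero.1 (Nat.le_zero.1 hcard)
        rwa [Finset.compl_eq_empty_iff] at h0
      refine ⟨L, fun x => hcov x (by simp [hs]), ?_⟩
      have : 0 ≤ ∑ e ∈ Fe.filter (fun e => ¬ ∀ v ∈ e, v ∈ s), edist2 e :=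
        Finset.sum_nonneg fun e _ => edist2_nonneg e
      linarith
    | succ n ih =>
      intro s hcard hr L hcov
      by_cases hs : s = Finset.univ
      · refine ⟨L, fun x => hcov x (by simp [hs]), ?_⟩
        have : 0 ≤ ∑ e ∈ Fe.filter (fun e => ¬ ∀ v ∈ e, v ∈ s), edist2 e :=
          Finset.sum_nonneg fun e _ => edist2_nonneg e
        linarith
      · have hz : ∃ z : X, z ∉ s := by
          by_contra h
          push_neg at h
          exact hs (Finset.eq_univ_iff_forall.2 h)
        obtain ⟨z, hz⟩ := hz
        obtain ⟨w⟩ := hTc.preconnected r z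
        obtain ⟨d, _, hdfst, hdsnd⟩ :=
          w.exists_boundary_dart (s : Set X) (by exact_mod_cast hr) (by simpa using hz)
        set y : X := d.fst with hy
        set x : X := d.snd with hx
        have hadj : T.Adj y x := d.adj
        have hys : y ∈ s := by simpa using hdfst
        have hxs : x ∉ s := by simpa using hdsnd
        have he0Fe : s(y, x) ∈ Fe := by
          rw [hFe, Set.Finite.mem_toFinset]
          exact hadj
        have he0 : s(y, x) ∈ Fe.filter (fun e => ¬ ∀ v ∈ e, v ∈ s) := by
          refine Finset.mem_filter.2 ⟨he0Fe, ?_⟩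
          push_neg
          exact ⟨x, by simp, hxs⟩
        -- construct the extended tour
        have hyL : y ∈ r :: L := hcov y hys
        have hL1 : ∃ L₁ : List X, (∀ z' ∈ insert x s, z' ∈ r :: L₁) ∧
            ccost r L₁ = ccost r L + dist y x + dist x y := by
          rcases List.mem_cons.1 hyL with hyr | hyL'
          · refine ⟨x :: r :: L, ?_, ?_⟩
            · intro z' hz'
              rcases Finset.mem_insert.1 hz' with rfl | hz''
              · simp
              · rcases List.mem_cons.1 (hcov z' hz'') with rfl | hm
                · simp
                · simp [hm]
            · simp only [ccost_cons]
              rw [← hyr]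
              ring
          · obtain ⟨A, B, hAB⟩ := List.append_of_mem hyL'
            refine ⟨A ++ y :: x :: y :: B, ?_, ?_⟩
            · intro z' hz'
              rcases Finset.mem_insert.1 hz' with rfl | hz''
              · simp
              · rcases List.mem_cons.1 (hcov z' hz'') with rfl | hm
                · simp
                · rw [hAB] at hm
                  rcases List.mem_append.1 hm with hm' | hm'
                  · simp [hm']
                  · rcases List.mem_cons.1 hm' with rfl | hm''
                    · simp
                    · simp [hm'']
            · rw [hAB]
              exact ccost_insert x y A r B
        obtain ⟨L₁, hcov₁, hcost₁⟩ := hL1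
        have hxc : x ∈ sᶜ := Finset.mem_compl.2 hxs
        have hcard' : (insert x s)ᶜ.card ≤ n := by
          rw [Finset.compl_insert]
          have h1 := Finset.card_erase_of_mem hxc
          omega
        obtain ⟨L', hL'cov, hL'cost⟩ := ih (insert x s) hcard'
          (Finset.mem_insert_of_mem hr) L₁ hcov₁
        refine ⟨L', hL'cov, ?_⟩
        have hsub : Fe.filter (fun e => ¬ ∀ v ∈ e, v ∈ insert x s) ⊆
            (Fe.filter (fun e => ¬ ∀ v ∈ e, v ∈ s)).erase s(y, x) := by
          intro e he
          rw [Finset.mem_filter] at he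
          refine Finset.mem_erase.2 ⟨?_, Finset.mem_filter.2 ⟨he.1, ?_⟩⟩
          · intro heq
            apply he.2
            rw [heq]
            intro v hv
            rcases Sym2.mem_iff.1 hv with rfl | rfl
            · exact Finset.mem_insert_of_mem hys
            · exact Finset.mem_insert_self _ _
          · intro hall
            exact he.2 fun v hv => Finset.mem_insert_of_mem (hall v hv)
        have hsum1 : ∑ e ∈ Fe.filter (fun e => ¬ ∀ v ∈ e, v ∈ insert x s), edist2 e ≤
            ∑ e ∈ (Fe.filter (fun e => ¬ ∀ v ∈ e, v ∈ s)).erase s(y, x), edist2 e :=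
          Finset.sum_le_sum_of_subset_of_nonneg hsub (fun e _ _ => edist2_nonneg e)
        have hsum2 : edist2 s(y, x) +
            ∑ e ∈ (Fe.filter (fun e => ¬ ∀ v ∈ e, v ∈ s)).erase s(y, x), edist2 e =
            ∑ e ∈ Fe.filter (fun e => ¬ ∀ v ∈ e, v ∈ s), edist2 e :=
          Finset.add_sum_erase _ edist2 he0
        have hd1 : edist2 s(y, x) = dist y x := edist2_mk y x
        have hd2 : dist x y = dist y x := dist_comm x y
        linarith
  obtain ⟨L', h1, h2⟩ := key ({r} : Finset X)ᶜ.card {r} le_rfl (Finset.mem_singleton_self r)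
    [] (by intro z hz; rw [Finset.mem_singleton] at hz; simp [hz])
  refine ⟨L', h1, ?_⟩
  have h3 : ∑ e ∈ Fe.filter (fun e => ¬ ∀ v ∈ e, v ∈ ({r} : Finset X)), edist2 e ≤
      ∑ e ∈ Fe, edist2 e :=
    Finset.sum_le_sum_of_subset_of_nonneg (Finset.filter_subset _ _)
      (fun e _ _ => edist2_nonneg e)
  have h4 : treeWeight T = ∑ e ∈ Fe, edist2 e := treeWeight_eq T
  simp only [ccost_nil] at h2
  linarith


end Metric
end AlaJia

open AlaJia List in
/-- Lemma `a-la-jia`: given a layer function `ℓ` with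
`τ^(ℓ x) * r0 ≤ d(x,r) ≤ D * τ^(ℓ x) * r0` for all `x ≠ r`, every spanning tree `T` of
`X` admits a layered spanning tree `TL` (every edge is incident to the root `r` or joins
two vertices of the same layer) whose weight is at most `2 * ⌈log_τ (1+D)⌉ * (1+D)`
times the weight of `T`. -/
theorem layered_spanning_tree {X : Type*} [MetricSpace X] [Fintype X] (r : X)
    (τ r0 D : ℝ) (hτ : 1 < τ) (hr0 : 0 < r0) (hD : 1 ≤ D)
    (ℓ : X → ℤ)
    (hℓ : ∀ x : X, x ≠ r →
      τ ^ (ℓ x) * r0 ≤ dist x r ∧ dist x r ≤ D * (τ ^ (ℓ x) * r0))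
    (T : SimpleGraph X) (hTc : T.Connected) (hTa : T.IsAcyclic) :
    ∃ TL : SimpleGraph X, TL.Connected ∧ TL.IsAcyclic ∧
      (∀ x y : X, TL.Adj x y → x = r ∨ y = r ∨ ℓ x = ℓ y) ∧
      treeWeight TL ≤ 2 * (⌈Real.logb τ (1 + D)⌉ : ℝ) * (1 + D) * treeWeight T := by
  classical
  set mZ : ℤ := ⌈Real.logb τ (1 + D)⌉ with hmZ
  have hD2 : (1 : ℝ) < 1 + D := by linarith
  have hτ0 : (0 : ℝ) < τ := lt_trans one_pos hτ
  have hm1 : 1 ≤ mZ := by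
    have h := Real.logb_pos hτ hD2
    have := Int.ceil_pos.2 h
    omega
  have hpow : 1 + D ≤ τ ^ mZ := by
    have h1 : Real.logb τ (1 + D) ≤ (mZ : ℝ) := Int.le_ceil _
    have h2 : (1 + D) = τ ^ Real.logb τ (1 + D) :=
      (Real.rpow_logb hτ0 (ne_of_gt hτ) (by linarith)).symm
    calc 1 + D = τ ^ Real.logb τ (1 + D) := h2
      _ ≤ τ ^ (mZ : ℝ) := by
          exact (Real.rpow_le_rpow_left_iff hτ).2 h1
      _ = τ ^ mZ := Real.rpow_intCast τ mZ
  -- tour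
  obtain ⟨L, hLcov, hLcost⟩ := tour_exists T hTc r
  -- nodup list of non-root vertices, in tour order
  set Mt : List X := dgo {r} L with hMtdef
  have hMtsub : Mt <+ L := dgo_sublist _ _
  have hMtnodup : Mt.Nodup := dgo_nodup _ _
  have hrMt : r ∉ Mt := fun h =>
    not_mem_seen_of_mem_dgo _ _ _ h (Finset.mem_singleton_self r)
  have hmemMt : ∀ x : X, x ≠ r → x ∈ Mt := by
    intro x hx
    have hxL : x ∈ L := by
      rcases List.mem_cons.1 (hLcov x) with h | h
      · exact absurd h hx
      · exact h
    exact mem_dgo_of _ _ _ hxL (by simp [hx])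
  have hMcost : ccost r Mt ≤ 2 * treeWeight T :=
    le_trans (ccost_sublist hMtsub r) hLcost
  set M : List X := r :: Mt with hMdef
  have hMnodup : M.Nodup := List.nodup_cons.2 ⟨hrMt, hMtnodup⟩
  -- the parent map
  set par : X → X → X := fun y x => if ℓ y = ℓ x ∧ y ≠ r then y else r with hpar
  set lcl : ℤ → List X := fun c => Mt.filter (fun z => decide (z ≠ r ∧ ℓ z % mZ = c))
    with hlcl
  set P : X → X := fun x => if x = r then r
    else par (prevElt r (lcl (ℓ x % mZ)) x) x with hP
  have hlcl_sub : ∀ c, lcl c <+ Mt := fun c => List.filter_sublist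
  have hmem_lcl : ∀ c (x : X), x ∈ lcl c ↔ x ∈ Mt ∧ x ≠ r ∧ ℓ x % mZ = c := by
    intro c x
    simp [hlcl, List.mem_filter]
  have hself_lcl : ∀ x : X, x ≠ r → x ∈ lcl (ℓ x % mZ) := fun x hx =>
    (hmem_lcl _ _).2 ⟨hmemMt x hx, hx, rfl⟩
  have hPr : P r = r := by simp [hP]
  have hidxpos : ∀ x : X, x ≠ r → 0 < M.idxOf x := by
    intro x hx
    rw [hMdef, List.idxOf_cons_ne _ (Ne.symm hx)]
    exact Nat.succ_pos _
  have hidx : ∀ x : X, x ≠ r → M.idxOf (P x) < M.idxOf x := by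
    intro x hx
    by_cases hc : ℓ (prevElt r (lcl (ℓ x % mZ)) x) = ℓ x ∧ prevElt r (lcl (ℓ x % mZ)) x ≠ r
    · have hPx : P x = prevElt r (lcl (ℓ x % mZ)) x := by
        rw [hP]
        simp only [if_neg hx, hpar, if_pos hc]
      have hpair : [prevElt r (lcl (ℓ x % mZ)) x, x] <+ M :=
        (prevElt_pair_sublist r _ x (hself_lcl x hx)).trans
          (List.Sublist.cons₂ r (hlcl_sub _))
      rw [hPx]
      exact indexOf_lt_of_pair_sublist M hMnodup _ _ hpair
    · have hPx : P x = r := by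
        rw [hP]
        simp only [if_neg hx, hpar, if_neg hc]
      rw [hPx, hMdef, List.idxOf_cons_self]
      exact hidxpos x hx
  have hPne : ∀ x : X, x ≠ r → P x ≠ x := by
    intro x hx h
    have := hidx x hx
    rw [h] at this
    exact lt_irrefl _ this
  have hPlayer : ∀ x : X, x ≠ r → P x = r ∨ ℓ (P x) = ℓ x := by
    intro x hx
    by_cases hc : ℓ (prevElt r (lcl (ℓ x % mZ)) x) = ℓ x ∧ prevElt r (lcl (ℓ x % mZ)) x ≠ r
    · right
      have hPx : P x = prevElt r (lcl (ℓ x % mZ)) x := by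
        rw [hP]; simp only [if_neg hx, hpar, if_pos hc]
      rw [hPx]; exact hc.1
    · left
      rw [hP]; simp only [if_neg hx, hpar, if_neg hc]
  -- the layered tree
  set TL : SimpleGraph X := SimpleGraph.fromRel (fun a b => a ≠ r ∧ P a = b) with hTLdef
  have hTLadj : ∀ a b : X, TL.Adj a b ↔ a ≠ b ∧ ((a ≠ r ∧ P a = b) ∨ (b ≠ r ∧ P b = a)) := by
    intro a b
    rw [hTLdef, SimpleGraph.fromRel_adj]
  have hadjP : ∀ x : X, x ≠ r → TL.Adj x (P x) := by
    intro x hx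
    exact (hTLadj _ _).2 ⟨(hPne x hx).symm, Or.inl ⟨hx, rfl⟩⟩
  -- connectivity
  have hreach : ∀ (n : ℕ) (x : X), M.idxOf x ≤ n → TL.Reachable x r := by
    intro n
    induction n with
    | zero =>
      intro x h
      by_cases hx : x = r
      · subst hx; exact SimpleGraph.Reachable.refl _
      · exact absurd h (by have := hidxpos x hx; omega)
    | succ n ih =>
      intro x h
      by_cases hx : x = r
      · subst hx; exact SimpleGraph.Reachable.refl _
      · exact ((hadjP x hx).reachable).trans (ih (P x) (by have := hidx x hx; omega))
  have hTLconn : TL.Connected := by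
    have hne : Nonempty X := ⟨r⟩
    exact ⟨fun a b => (hreach _ a le_rfl).trans (hreach _ b le_rfl).symm⟩
  -- acyclicity
  have hidx_le : ∀ z : X, M.idxOf (P z) ≤ M.idxOf z := by
    intro z
    by_cases hz : z = r
    · subst hz; rw [hPr]
    · exact (hidx z hz).le
  have hiter : ∀ (k : ℕ) (z : X), M.idxOf (P^[k] z) ≤ M.idxOf z := by
    intro k
    induction k with
    | zero => intro z; simp
    | succ k ih =>
      intro z
      rw [Function.iterate_succ_apply]
      exact (ih (P z)).trans (hidx_le z)
  have hacyc : TL.IsAcyclic := by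
    rw [SimpleGraph.isAcyclic_iff_forall_adj_isBridge]
    intro v w hvw
    rw [SimpleGraph.isBridge_iff]
    show ¬ (TL \ SimpleGraph.fromEdgeSet {s(v, w)}).Reachable v w
    obtain ⟨hne, hcase⟩ := (hTLadj v w).1 hvw
    have main : ∀ z : X, z ≠ r →
        ¬ (TL \ SimpleGraph.fromEdgeSet {s(z, P z)}).Reachable z (P z) := by
      intro z hz hre
      set S : Set X := {y | ∃ k : ℕ, P^[k] y = z} with hSdef
      have hzS : z ∈ S := ⟨0, rfl⟩
      have hPzS : P z ∉ S := by
        rintro ⟨k, hk⟩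
        have h1 : M.idxOf (P^[k] (P z)) ≤ M.idxOf (P z) := hiter k (P z)
        rw [hk] at h1
        have := hidx z hz
        omega
      obtain ⟨wlk⟩ := hre
      obtain ⟨d, _, hdfst, hdsnd⟩ := wlk.exists_boundary_dart S hzS hPzS
      have hd := d.adj
      rw [SimpleGraph.sdiff_adj, SimpleGraph.fromEdgeSet_adj] at hd
      obtain ⟨hd1, hd2⟩ := hd
      have hdne : d.fst ≠ d.snd := hd1.ne
      have hd2' : s(d.fst, d.snd) ≠ s(z, P z) := by
        intro h
        exact hd2 ⟨by simp [h], hdne⟩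
      have hstep : ∀ a : X, a ≠ z → (a ∈ S ↔ P a ∈ S) := by
        intro a haz
        constructor
        · rintro ⟨k, hk⟩
          cases k with
          | zero => exact absurd hk haz
          | succ k => exact ⟨k, by rwa [Function.iterate_succ_apply] at hk⟩
        · rintro ⟨k, hk⟩
          exact ⟨k + 1, by rw [Function.iterate_succ_apply]; exact hk⟩
      obtain ⟨_, hcc⟩ := (hTLadj _ _).1 hd1
      rcases hcc with ⟨ha, hPa⟩ | ⟨hb, hPb⟩
      · by_cases hfz : d.fst = z
        · apply hd2'
          rw [hfz] at hPa ⊢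
          rw [← hPa]
        · exact hdsnd (by rw [← hPa]; exact (hstep d.fst hfz).1 hdfst)
      · by_cases hsz : d.snd = z
        · exact hdsnd (by rw [hsz]; exact hzS)
        · exact hdsnd ((hstep d.snd hsz).2 (by rw [hPb]; exact hdfst))
    rcases hcase with ⟨hvr, hPv⟩ | ⟨hwr, hPw⟩
    · rw [← hPv]
      exact main v hvr
    · intro hre
      apply main w hwr
      have h2 : s(w, P w) = s(v, w) := by rw [hPw, Sym2.eq_swap]
      rw [h2, hPw]
      exact hre.symm
  -- edge set and weight
  set S0 : Finset X := Finset.univ.erase r with hS0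
  have hS0mem : ∀ x : X, x ∈ S0 ↔ x ≠ r := by
    intro x; simp [hS0]
  set Efin : Finset (Sym2 X) := S0.image (fun x => s(x, P x)) with hEfin
  have hedge : TL.edgeSet = ↑Efin := by
    ext e
    induction e using Sym2.inductionOn with
    | hf a b =>
      rw [SimpleGraph.mem_edgeSet]
      constructor
      · intro hab
        obtain ⟨hne, hcc⟩ := (hTLadj a b).1 hab
        rcases hcc with ⟨ha, hPa⟩ | ⟨hb, hPb⟩
        · exact Finset.mem_coe.2 (Finset.mem_image.2
            ⟨a, (hS0mem a).2 ha, by rw [hPa]⟩)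
        · exact Finset.mem_coe.2 (Finset.mem_image.2
            ⟨b, (hS0mem b).2 hb, by rw [hPb, Sym2.eq_swap]⟩)
      · intro he
        obtain ⟨x, hxS, hxe⟩ := Finset.mem_image.1 (Finset.mem_coe.1 he)
        have hx : x ≠ r := (hS0mem x).1 hxS
        rcases Sym2.eq_iff.1 hxe with ⟨h1, h2⟩ | ⟨h1, h2⟩
        · rw [← h1, ← h2]
          exact hadjP x hx
        · rw [← h1, ← h2]
          exact (hadjP x hx).symm
  have hinj : ∀ x ∈ S0, ∀ y ∈ S0, s(x, P x) = s(y, P y) → x = y := by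
    intro x hx y hy h
    rcases Sym2.eq_iff.1 h with ⟨h1, _⟩ | ⟨h1, h2⟩
    · exact h1
    · exfalso
      have hx' := hidx x ((hS0mem x).1 hx)
      have hy' := hidx y ((hS0mem y).1 hy)
      rw [h2] at hx'
      rw [← h1] at hy'
      omega
  have hfsum : treeWeight TL = ∑ x ∈ S0, dist x (P x) := by
    rw [treeWeight_eq]
    have hEq : (Set.toFinite TL.edgeSet).toFinset = Efin :=
      Finset.coe_injective (by rw [Set.Finite.coe_toFinset, hedge])
    rw [hEq, hEfin, Finset.sum_image hinj]
    exact Finset.sum_congr rfl fun x _ => edist2_mk x (P x)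
  -- the per-class bound
  have hclass : ∀ c ∈ Finset.Ico (0 : ℤ) mZ,
      ∑ x ∈ S0.filter (fun x => ℓ x % mZ = c), dist x (P x) ≤
        (1 + D) * (2 * treeWeight T) := by
    intro c _
    have hset : S0.filter (fun x => ℓ x % mZ = c) = (lcl c).toFinset := by
      ext x
      rw [Finset.mem_filter, List.mem_toFinset, hmem_lcl, hS0mem]
      constructor
      · rintro ⟨hx, hc⟩
        exact ⟨hmemMt x hx, hx, hc⟩
      · rintro ⟨_, hx, hc⟩
        exact ⟨hx, hc⟩
    rw [hset]
    have hGform : ∀ x ∈ (lcl c).toFinset,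
        dist x (P x) = dist x (par (prevElt r (lcl c) x) x) := by
      intro x hx
      obtain ⟨hxMt, hxr, hxc⟩ := (hmem_lcl c x).1 (List.mem_toFinset.1 hx)
      rw [hP]
      simp only [if_neg hxr]
      rw [hxc]
    rw [Finset.sum_congr rfl hGform]
    have hnodup : (lcl c).Nodup := hMtnodup.sublist (hlcl_sub c)
    have hCH : ∑ x ∈ (lcl c).toFinset, dist x (par (prevElt r (lcl c) x) x) ≤
        (1 + D) * ccost r (lcl c) := by
      refine chain_sum_le (fun y x => dist x (par y x)) r (lcl c) hnodup ?_
      intro x hx y hy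
      obtain ⟨hxMt, hxr, hxc⟩ := (hmem_lcl c x).1 hx
      by_cases hcnd : ℓ y = ℓ x ∧ y ≠ r
      · rw [hpar]
        simp only [if_pos hcnd]
        rw [dist_comm x y]
        nlinarith [dist_nonneg (x := y) (y := x)]
      · rw [hpar]
        simp only [if_neg hcnd]
        rcases hy with rfl | hy'
        · rw [dist_comm y x]
          nlinarith [dist_nonneg (x := x) (y := y)]
        · obtain ⟨hyMt, hyr, hyc⟩ := (hmem_lcl c y).1 hy'
          have hly : ℓ x ≠ ℓ y := fun h => hcnd ⟨h.symm, hyr⟩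
          have hdvd : mZ ∣ ℓ x - ℓ y := by
            have hmod : ℓ y % mZ = ℓ x % mZ := by rw [hxc, hyc]
            exact Int.ModEq.dvd hmod
          exact sep_bound r x y hτ hr0 hD hpow (hℓ x hxr).1 (hℓ x hxr).2
            (hℓ y hyr).1 (hℓ y hyr).2 hly hdvd
    have hsubcost : ccost r (lcl c) ≤ ccost r Mt := ccost_sublist (hlcl_sub c) r
    calc ∑ x ∈ (lcl c).toFinset, dist x (par (prevElt r (lcl c) x) x)
        ≤ (1 + D) * ccost r (lcl c) := hCH
      _ ≤ (1 + D) * ccost r Mt := by nlinarith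
      _ ≤ (1 + D) * (2 * treeWeight T) := by nlinarith
  -- assemble
  have hfib : ∑ x ∈ S0, dist x (P x) =
      ∑ c ∈ Finset.Ico (0 : ℤ) mZ,
        ∑ x ∈ S0.filter (fun x => ℓ x % mZ = c), dist x (P x) := by
    refine (Finset.sum_fiberwise_of_maps_to ?_ _).symm
    intro x _
    exact Finset.mem_Ico.2 ⟨Int.emod_nonneg _ (by omega), Int.emod_lt_of_pos _ (by omega)⟩
  have hcard : ((Finset.Ico (0 : ℤ) mZ).card : ℝ) = (mZ : ℝ) := by
    rw [Int.card_Ico, sub_zero]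
    have h := Int.toNat_of_nonneg (show (0 : ℤ) ≤ mZ by omega)
    exact_mod_cast congrArg (fun z : ℤ => (z : ℝ)) h
  have hbound : ∑ x ∈ S0, dist x (P x) ≤ (mZ : ℝ) * ((1 + D) * (2 * treeWeight T)) := by
    rw [hfib]
    calc ∑ c ∈ Finset.Ico (0 : ℤ) mZ,
          ∑ x ∈ S0.filter (fun x => ℓ x % mZ = c), dist x (P x)
        ≤ ∑ _c ∈ Finset.Ico (0 : ℤ) mZ, (1 + D) * (2 * treeWeight T) :=
          Finset.sum_le_sum hclass
      _ = ((Finset.Ico (0 : ℤ) mZ).card : ℝ) * ((1 + D) * (2 * treeWeight T)) := by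
          rw [Finset.sum_const, nsmul_eq_mul]
      _ = (mZ : ℝ) * ((1 + D) * (2 * treeWeight T)) := by rw [hcard]
  refine ⟨TL, hTLconn, hacyc, ?_, ?_⟩
  · intro x y hxy
    obtain ⟨_, hcc⟩ := (hTLadj x y).1 hxy
    rcases hcc with ⟨hxr, hPx⟩ | ⟨hyr, hPy⟩
    · rcases hPlayer x hxr with h | h
      · right; left; rw [← hPx]; exact h
      · right; right; rw [hPx] at h; exact h.symm
    · rcases hPlayer y hyr with h | h
      · left; rw [← hPy]; exact h
      · right; right; rw [hPy] at h; exact h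
  · rw [hfsum]
    calc ∑ x ∈ S0, dist x (P x) ≤ (mZ : ℝ) * ((1 + D) * (2 * treeWeight T)) := hbound
      _ = 2 * (mZ : ℝ) * (1 + D) * treeWeight T := by ring
end

section
/- Let (V,d) be a metric space, let τ > 1 be real, let η and j be natural numbers, let r_0 > 0, and set c = τ·2^{-η}/(τ−1) and C(η,τ) = (1 + (τ/(τ−1))²·2^{3−η})·τ. Let v = v_0, v_1, …, v_m = u be points of V and l_1 < ⋯ < l_m ≤ j+1 strictly increasing natural numbers, and let v* = w_0, w_1, …, w_p = u* be points of V and l'_1 < ⋯ < l'_p ≤ j+1 strictly increasing natural numbers. Suppose d(v, v*) ≥ τ^j·r_0. Then Σ_{i=1}^{m} 2c·τ^{l_i}·r_0 + (1 + 4c)·τ^{j+1}·r_0 + Σ_{i=1}^{p} 2c·τ^{l'_i}·r_0 ≤ C(η,τ)·d(v, v*). -/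
/-- The stretch guarantee of the pseudospanner (Theorem 3): the total weight of the
pseudospanner path from `v` up to its level-`(j+1)` leader `u` (edges of weight
`2c*τ^(l i)*r0` at strictly increasing levels `l i ≤ j+1`), across the connecting edge
of weight `(1+4c)*τ^(j+1)*r0`, and down from the leader `u*` to `v*`, is at most
`C(η,τ) * d(v,v*)`, provided `d(v,v*) ≥ τ^j * r0`. Here `c = τ*2^(-η)/(τ-1)` and
`C(η,τ) = (1 + (τ/(τ-1))² * 2^(3-η)) * τ`. -/
theorem pseudospanner_stretch {V : Type*} [MetricSpace V]
    (τ : ℝ) (hτ : 1 < τ) (η j : ℕ) (r0 : ℝ) (hr0 : 0 < r0)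
    (c C : ℝ)
    (hc : c = τ * (2 : ℝ) ^ (-(η : ℤ)) / (τ - 1))
    (hC : C = (1 + (τ / (τ - 1)) ^ 2 * (2 : ℝ) ^ ((3 : ℤ) - (η : ℤ))) * τ)
    (m p : ℕ) (v vstar u ustar : V) (vv ww : ℕ → V)
    (hvv0 : vv 0 = v) (hvvm : vv m = u) (hww0 : ww 0 = vstar) (hwwp : ww p = ustar)
    (l l' : ℕ → ℕ)
    (hl : StrictMonoOn l (Set.Icc 1 m)) (hlle : ∀ i, 1 ≤ i → i ≤ m → l i ≤ j + 1)
    (hl' : StrictMonoOn l' (Set.Icc 1 p)) (hl'le : ∀ i, 1 ≤ i → i ≤ p → l' i ≤ j + 1)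
    (hdist : τ ^ j * r0 ≤ dist v vstar) :
    (∑ i ∈ Finset.Icc 1 m, 2 * c * τ ^ (l i) * r0)
        + (1 + 4 * c) * τ ^ (j + 1) * r0
        + (∑ i ∈ Finset.Icc 1 p, 2 * c * τ ^ (l' i) * r0)
      ≤ C * dist v vstar := by
  have hτ0 : (0:ℝ) < τ := lt_trans one_pos hτ
  have hτ1 : (0:ℝ) < τ - 1 := by linarith
  have hA : (0:ℝ) < (2:ℝ) ^ (-(η : ℤ)) := by positivity
  have hc0 : 0 < c := by rw [hc]; positivity
  -- geometric sum bound
  set S : ℝ := ∑ k ∈ Finset.range (j+2), τ ^ k with hSdef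
  have hSle : S ≤ τ ^ (j+2) / (τ - 1) := by
    have h : S = (τ ^ (j+2) - 1) / (τ - 1) := geom_sum_eq (ne_of_gt hτ) _
    rw [h]
    gcongr <;> linarith
  have key : ∀ (q : ℕ) (f : ℕ → ℕ), StrictMonoOn f (Set.Icc 1 q) →
      (∀ i, 1 ≤ i → i ≤ q → f i ≤ j + 1) →
      (∑ i ∈ Finset.Icc 1 q, τ ^ (f i)) ≤ S := by
    intro q f hf hfle
    have hinj : Set.InjOn f (Finset.Icc 1 q : Finset ℕ) := by
      intro a ha b hb hab
      simp only [Finset.coe_Icc] at ha hb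
      exact hf.injOn ha hb hab
    have h1 : (∑ i ∈ Finset.Icc 1 q, τ ^ (f i))
        = ∑ k ∈ (Finset.Icc 1 q).image f, τ ^ k :=
      (Finset.sum_image (fun a ha b hb hab => hinj ha hb hab)).symm
    rw [h1, hSdef]
    apply Finset.sum_le_sum_of_subset_of_nonneg
    · intro k hk
      simp only [Finset.mem_image, Finset.mem_Icc] at hk
      obtain ⟨i, ⟨hi1, hi2⟩, rfl⟩ := hk
      exact Finset.mem_range.mpr (Nat.lt_succ_of_le (hfle i hi1 hi2))
    · intro k _ _
      positivity
  have hS1 := key m l hl hlle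
  have hS2 := key p l' hl' hl'le
  have hrw : ∀ (q : ℕ) (f : ℕ → ℕ),
      (∑ i ∈ Finset.Icc 1 q, 2 * c * τ ^ (f i) * r0)
        = 2 * c * r0 * (∑ i ∈ Finset.Icc 1 q, τ ^ (f i)) := by
    intro q f
    rw [Finset.mul_sum]
    exact Finset.sum_congr rfl (fun i _ => by ring)
  rw [hrw m l, hrw p l']
  have hcr : (0:ℝ) < 2 * c * r0 := by positivity
  have hmain : 2 * c * r0 * S + (1 + 4 * c) * τ ^ (j + 1) * r0 + 2 * c * r0 * S
      ≤ C * (τ ^ j * r0) := by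
    have hSle' : 2 * c * r0 * S ≤ 2 * c * r0 * (τ ^ (j+2) / (τ - 1)) :=
      mul_le_mul_of_nonneg_left hSle (le_of_lt hcr)
    have h8 : (2:ℝ) ^ ((3:ℤ) - (η:ℤ)) = 8 * (2:ℝ) ^ (-(η:ℤ)) := by
      rw [sub_eq_add_neg, zpow_add₀ (by norm_num : (2:ℝ) ≠ 0)]
      norm_num
    have hX : (0:ℝ) < τ ^ j := by positivity
    have hτ1' : (τ - 1) ≠ 0 := ne_of_gt hτ1
    have hsuff : 4 * c * r0 * (τ ^ (j+2) / (τ - 1)) + (1 + 4 * c) * τ ^ (j + 1) * r0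
        ≤ C * (τ ^ j * r0) := by
      set A := (2:ℝ) ^ (-(η : ℤ)) with hAdef
      set X := τ ^ j with hXdef
      have h1 : τ ^ (j+2) = X * τ * τ := by rw [hXdef]; ring
      have h2 : τ ^ (j+1) = X * τ := by rw [hXdef]; ring
      rw [hc, hC, h8, h1, h2]
      have e1 : 4 * (τ * A / (τ - 1)) * r0 * (X * τ * τ / (τ - 1))
          + (1 + 4 * (τ * A / (τ - 1))) * (X * τ) * r0
          = (4 * τ * A * r0 * (X * τ * τ) + ((τ - 1) + 4 * τ * A) * (X * τ) * r0 * (τ - 1))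
            / (τ - 1) ^ 2 := by
        rw [eq_div_iff (by positivity : ((τ:ℝ) - 1) ^ 2 ≠ 0)]
        field_simp
      have e2 : (1 + (τ / (τ - 1)) ^ 2 * (8 * A)) * τ * (X * r0)
          = (((τ - 1) ^ 2 + 8 * A * τ ^ 2) * τ * (X * r0)) / (τ - 1) ^ 2 := by
        rw [eq_div_iff (by positivity : ((τ:ℝ) - 1) ^ 2 ≠ 0)]
        field_simp
      rw [e1, e2, div_le_div_iff₀ (by positivity) (by positivity)]
      nlinarith [mul_nonneg (mul_nonneg (mul_nonneg hA.le hX.le) (sq_nonneg τ)) hr0.le,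
        sq_nonneg (τ - 1)]
    nlinarith [hSle']
  calc 2 * c * r0 * (∑ i ∈ Finset.Icc 1 m, τ ^ (l i))
        + (1 + 4 * c) * τ ^ (j + 1) * r0
        + 2 * c * r0 * (∑ i ∈ Finset.Icc 1 p, τ ^ (l' i))
      ≤ 2 * c * r0 * S + (1 + 4 * c) * τ ^ (j + 1) * r0 + 2 * c * r0 * S := by
        gcongr
    _ ≤ C * (τ ^ j * r0) := hmain
    _ ≤ C * dist v vstar := by
        apply mul_le_mul_of_nonneg_left hdist
        rw [hC]; positivity
end

section
/- Let α be a finite nonempty type, let f : α → α, and let ρ ∈ α satisfy f(ρ) = ρ and: for every v ∈ α there exists k with f^[k](v) = ρ (so f is the parent map of a rooted tree with root ρ). For v ∈ α let sub(v) = {u ∈ α : ∃ k, f^[k](u) = v} denote the subtree of v, and call a node v ≠ ρ 'light' if 2·|sub(v)| ≤ |sub(f(v))|. Then for every v ∈ α, the number of light nodes among the iterates v, f(v), f²(v), … (i.e., the cardinality of {w : w is light and ∃ k, f^[k](v) = w}) is at most ⌈log₂ |α|⌉. -/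
set_option linter.unusedSectionVars false

section Aux

variable {α : Type*} [Fintype α] (f : α → α) (ρ : α)

private lemma heavy_anc_eq (v : α) :
    {w : α | ∃ k : ℕ, f^[k] v = w} = insert v {w : α | ∃ k : ℕ, f^[k] (f v) = w} := by
  ext w
  constructor
  · rintro ⟨k, rfl⟩
    cases k with
    | zero => exact Or.inl rfl
    | succ m => exact Or.inr ⟨m, (Function.iterate_succ_apply f m v).symm⟩
  · rintro (rfl | ⟨m, rfl⟩)
    · exact ⟨0, rfl⟩
    · exact ⟨m + 1, Function.iterate_succ_apply f m v⟩

private lemma heavy_not_anc (hroot : f ρ = ρ) (hreach : ∀ v : α, ∃ k : ℕ, f^[k] v = ρ)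
    (v : α) (hv : v ≠ ρ) : v ∉ {w : α | ∃ k : ℕ, f^[k] (f v) = w} := by
  rintro ⟨k, hk⟩
  have hcyc : f^[k + 1] v = v := by
    rw [Function.iterate_succ_apply]; exact hk
  have hmul : ∀ m : ℕ, f^[m * (k + 1)] v = v := by
    intro m
    induction m with
    | zero => simp
    | succ n ih =>
      rw [Nat.succ_mul, Function.iterate_add_apply, hcyc, ih]
  obtain ⟨n, hn⟩ := hreach v
  have h1 : n * (k + 1) ≥ n := Nat.le_mul_of_pos_right n (Nat.succ_pos k)
  have : f^[n * (k + 1)] v = ρ := by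
    have := Function.iterate_add_apply f (n * (k + 1) - n) n v
    rw [Nat.sub_add_cancel h1] at this
    rw [this, hn, Function.iterate_fixed hroot]
  exact hv ((hmul n).symm.trans this)

private lemma heavy_sub_subset (v : α) :
    {u : α | ∃ k : ℕ, f^[k] u = v} ⊆ {u : α | ∃ k : ℕ, f^[k] u = f v} := by
  rintro u ⟨k, rfl⟩
  exact ⟨k + 1, Function.iterate_succ_apply' f k u⟩

private lemma heavy_aux (hroot : f ρ = ρ) (hreach : ∀ v : α, ∃ k : ℕ, f^[k] v = ρ) :
    ∀ n : ℕ, ∀ v : α, f^[n] v = ρ →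
      2 ^ ({w : α | (w ≠ ρ ∧
          2 * {u : α | ∃ k : ℕ, f^[k] u = w}.ncard
            ≤ {u : α | ∃ k : ℕ, f^[k] u = f w}.ncard) ∧
        ∃ k : ℕ, f^[k] v = w}.ncard)
        * {u : α | ∃ k : ℕ, f^[k] u = v}.ncard
      ≤ {u : α | ∃ k : ℕ, f^[k] u = ρ}.ncard := by
  intro n
  induction n with
  | zero =>
    intro v hv
    simp only [Function.iterate_zero_apply] at hv
    subst hv
    have hanc : {w : α | ∃ k : ℕ, f^[k] v = w} = {v} := by
      ext w
      constructor
      · rintro ⟨k, rfl⟩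
        exact Function.iterate_fixed hroot k
      · rintro rfl; exact ⟨0, rfl⟩
    have hL : {w : α | (w ≠ v ∧
          2 * {u : α | ∃ k : ℕ, f^[k] u = w}.ncard
            ≤ {u : α | ∃ k : ℕ, f^[k] u = f w}.ncard) ∧
        ∃ k : ℕ, f^[k] v = w} = ∅ := by
      ext w
      simp only [Set.mem_setOf_eq, Set.mem_empty_iff_false, iff_false, not_and]
      rintro ⟨hne, -⟩ ⟨k, rfl⟩
      exact hne (Function.iterate_fixed hroot k)
    rw [hL]
    simp
  | succ n ih =>
    intro v hv
    by_cases hvρ : v = ρ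
    · subst hvρ
      have hL : {w : α | (w ≠ v ∧
            2 * {u : α | ∃ k : ℕ, f^[k] u = w}.ncard
              ≤ {u : α | ∃ k : ℕ, f^[k] u = f w}.ncard) ∧
          ∃ k : ℕ, f^[k] v = w} = ∅ := by
        ext w
        simp only [Set.mem_setOf_eq, Set.mem_empty_iff_false, iff_false, not_and]
        rintro ⟨hne, -⟩ ⟨k, rfl⟩
        exact hne (Function.iterate_fixed hroot k)
      rw [hL]
      simp
    · have hfv : f^[n] (f v) = ρ := by
        rw [← Function.iterate_succ_apply]; exact hv
      have IH := ih (f v) hfv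
      -- the light-ancestor set of v vs that of f v
      have hsplit : {w : α | (w ≠ ρ ∧
            2 * {u : α | ∃ k : ℕ, f^[k] u = w}.ncard
              ≤ {u : α | ∃ k : ℕ, f^[k] u = f w}.ncard) ∧
          ∃ k : ℕ, f^[k] v = w}
          = {w : α | w ≠ ρ ∧
            2 * {u : α | ∃ k : ℕ, f^[k] u = w}.ncard
              ≤ {u : α | ∃ k : ℕ, f^[k] u = f w}.ncard} ∩
            insert v {w : α | ∃ k : ℕ, f^[k] (f v) = w} := by
        rw [← heavy_anc_eq f v]
        ext w
        simp [Set.mem_setOf_eq, and_comm]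
      have hLfv : {w : α | (w ≠ ρ ∧
            2 * {u : α | ∃ k : ℕ, f^[k] u = w}.ncard
              ≤ {u : α | ∃ k : ℕ, f^[k] u = f w}.ncard) ∧
          ∃ k : ℕ, f^[k] (f v) = w}
          = {w : α | w ≠ ρ ∧
            2 * {u : α | ∃ k : ℕ, f^[k] u = w}.ncard
              ≤ {u : α | ∃ k : ℕ, f^[k] u = f w}.ncard} ∩
            {w : α | ∃ k : ℕ, f^[k] (f v) = w} := by
        ext w; simp [Set.mem_setOf_eq]
      by_cases hlight : 2 * {u : α | ∃ k : ℕ, f^[k] u = v}.ncard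
          ≤ {u : α | ∃ k : ℕ, f^[k] u = f v}.ncard
      · -- v is light
        have hins : {w : α | w ≠ ρ ∧
              2 * {u : α | ∃ k : ℕ, f^[k] u = w}.ncard
                ≤ {u : α | ∃ k : ℕ, f^[k] u = f w}.ncard} ∩
              insert v {w : α | ∃ k : ℕ, f^[k] (f v) = w}
            = insert v ({w : α | w ≠ ρ ∧
              2 * {u : α | ∃ k : ℕ, f^[k] u = w}.ncard
                ≤ {u : α | ∃ k : ℕ, f^[k] u = f w}.ncard} ∩
              {w : α | ∃ k : ℕ, f^[k] (f v) = w}) :=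
          Set.inter_insert_of_mem ⟨hvρ, hlight⟩
        rw [hsplit, hins, Set.ncard_insert_of_notMem
          (fun h => heavy_not_anc f ρ hroot hreach v hvρ h.2) (Set.toFinite _)]
        rw [← hLfv, pow_succ, mul_assoc]
        exact le_trans (Nat.mul_le_mul_left _ hlight) IH
      · -- v is not light
        have hnotins : {w : α | w ≠ ρ ∧
              2 * {u : α | ∃ k : ℕ, f^[k] u = w}.ncard
                ≤ {u : α | ∃ k : ℕ, f^[k] u = f w}.ncard} ∩
              insert v {w : α | ∃ k : ℕ, f^[k] (f v) = w}
            = {w : α | w ≠ ρ ∧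
              2 * {u : α | ∃ k : ℕ, f^[k] u = w}.ncard
                ≤ {u : α | ∃ k : ℕ, f^[k] u = f w}.ncard} ∩
              {w : α | ∃ k : ℕ, f^[k] (f v) = w} := by
          ext w
          simp only [Set.mem_inter_iff, Set.mem_insert_iff, Set.mem_setOf_eq]
          constructor
          · rintro ⟨hw, (rfl | hw2)⟩
            · exact absurd hw.2 hlight
            · exact ⟨hw, hw2⟩
          · rintro ⟨hw, hw2⟩; exact ⟨hw, Or.inr hw2⟩
        rw [hsplit, hnotins, ← hLfv]
        exact le_trans (Nat.mul_le_mul_left _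
          (Set.ncard_le_ncard (heavy_sub_subset f v) (Set.toFinite _))) IH

end Aux

/-- The counting argument of the heavy-path decomposition lemma: in a rooted tree on a
finite vertex set `α` given by a parent map `f` with root `ρ` (so `f ρ = ρ` and every
vertex reaches `ρ` by iterating `f`), calling a node `w ≠ ρ` light if
`2 * |sub w| ≤ |sub (f w)|` (where `sub w` is the subtree of `w`), every vertex `v` has
at most `⌈log₂ |α|⌉` light nodes among its iterated ancestors `v, f v, f² v, …`. -/
theorem heavy_path_light_count {α : Type*} [Fintype α] [Nonempty α]
    (f : α → α) (ρ : α) (hroot : f ρ = ρ) (hreach : ∀ v : α, ∃ k : ℕ, f^[k] v = ρ) :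
    ∀ v : α,
      {w : α | (w ≠ ρ ∧
          2 * {u : α | ∃ k : ℕ, f^[k] u = w}.ncard
            ≤ {u : α | ∃ k : ℕ, f^[k] u = f w}.ncard) ∧
        ∃ k : ℕ, f^[k] v = w}.ncard
      ≤ Nat.clog 2 (Fintype.card α) := by
  intro v
  obtain ⟨n, hn⟩ := hreach v
  have key := heavy_aux f ρ hroot hreach n v hn
  have hsubv : 1 ≤ {u : α | ∃ k : ℕ, f^[k] u = v}.ncard := by
    rw [Nat.one_le_iff_ne_zero, ← Nat.pos_iff_ne_zero, Set.ncard_pos (Set.toFinite _)]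
    exact ⟨v, 0, rfl⟩
  have h1 : 2 ^ ({w : α | (w ≠ ρ ∧
          2 * {u : α | ∃ k : ℕ, f^[k] u = w}.ncard
            ≤ {u : α | ∃ k : ℕ, f^[k] u = f w}.ncard) ∧
        ∃ k : ℕ, f^[k] v = w}.ncard) ≤ Fintype.card α := by
    calc 2 ^ _ = 2 ^ _ * 1 := (mul_one _).symm
      _ ≤ 2 ^ _ * {u : α | ∃ k : ℕ, f^[k] u = v}.ncard := Nat.mul_le_mul_left _ hsubv
      _ ≤ {u : α | ∃ k : ℕ, f^[k] u = ρ}.ncard := key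
      _ ≤ (Set.univ : Set α).ncard :=
          Set.ncard_le_ncard (Set.subset_univ _) (Set.toFinite _)
      _ = Fintype.card α := by rw [Set.ncard_univ, Nat.card_eq_fintype_card]
  calc {w : α | (w ≠ ρ ∧
          2 * {u : α | ∃ k : ℕ, f^[k] u = w}.ncard
            ≤ {u : α | ∃ k : ℕ, f^[k] u = f w}.ncard) ∧
        ∃ k : ℕ, f^[k] v = w}.ncard
      = Nat.clog 2 (2 ^ _) := (Nat.clog_pow 2 _ one_lt_two).symm
    _ ≤ Nat.clog 2 (Fintype.card α) := Nat.clog_mono_right 2 h1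
end
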